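/- If A is an n×n real matrix all of whose eigenvalues have negative real part, then the integral P = ∫₀^∞ e^{At} B Bᵀ e^{Aᵀt} dt converges and satisfies the Lyapunov equation A P + P Aᵀ + B Bᵀ = 0. -/

import Mathlib

open Matrix MeasureTheory

/-- `A` is Hurwitz: all complex eigenvalues have negative real part. -/
def IsHurwitz {n : ℕ} (A : Matrix (Fin n) (Fin n) ℝ) : Prop :=
  ∀ μ ∈ spectrum ℂ (A.map (algebraMap ℝ ℂ)), μ.re < 0

namespace GramianLyapunovAux

open NormedSpace Filter Topology
open scoped ENNReal NNReal

attribute [local instance] Matrix.linftyOpNormedAddCommGroup Matrix.linftyOpNormedRing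
  Matrix.linftyOpNormedAlgebra

/-- Entrywise bound by the `L∞`-operator norm. -/
lemma entry_norm_le {p q : Type*} [Fintype p] [Fintype q] {α : Type*} [NormedAddCommGroup α]
    (X : Matrix p q α) (i : p) (j : q) : ‖X i j‖ ≤ ‖X‖ := by
  have h1 : ‖X i j‖₊ ≤ ∑ j', ‖X i j'‖₊ :=
    Finset.single_le_sum (f := fun j' => ‖X i j'‖₊) (fun _ _ => zero_le) (Finset.mem_univ j)
  have h2 : (∑ j', ‖X i j'‖₊) ≤ ‖X‖₊ := by
    rw [Matrix.linfty_opNNNorm_def]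
    exact Finset.le_sup (f := fun i' => ∑ j' : q, ‖X i' j'‖₊) (Finset.mem_univ i)
  exact_mod_cast h1.trans h2

/-- An eigenvector of `M` is an eigenvector of `exp M`. -/
lemma mulVec_exp_eigen {n : ℕ} (M : Matrix (Fin n) (Fin n) ℂ) {μ : ℂ} {v : Fin n → ℂ}
    (hv : M.mulVec v = μ • v) :
    (exp M).mulVec v = Complex.exp μ • v := by
  have hpow : ∀ k : ℕ, (M ^ k).mulVec v = μ ^ k • v := by
    intro k
    induction k with
    | zero => simp
    | succ k ih =>
      rw [pow_succ, ← Matrix.mulVec_mulVec, hv, Matrix.mulVec_smul, ih, smul_smul, pow_succ,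
        mul_comm]
  let L0 : Matrix (Fin n) (Fin n) ℂ →ₗ[ℂ] (Fin n → ℂ) :=
    { toFun := fun X => X.mulVec v
      map_add' := fun X Y => Matrix.add_mulVec X Y v
      map_smul' := fun c X => Matrix.smul_mulVec c X v }
  let L := LinearMap.toContinuousLinearMap L0
  have hL : (exp M).mulVec v = L (exp M) := rfl
  rw [hL, exp_eq_tsum ℂ, L.map_tsum (expSeries_summable' (𝕂 := ℂ) M)]
  have : ∀ k : ℕ, L (((k.factorial : ℂ))⁻¹ • M ^ k) = (((k.factorial : ℂ))⁻¹ * μ ^ k) • v := by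
    intro k
    show (((k.factorial : ℂ))⁻¹ • M ^ k).mulVec v = _
    rw [Matrix.smul_mulVec, hpow, smul_smul]
  simp_rw [this]
  rw [Summable.tsum_smul_const]
  · congr 1
    rw [Complex.exp_eq_exp_ℂ, exp_eq_tsum ℂ]
    simp [smul_eq_mul]
  · simpa [smul_eq_mul] using expSeries_summable' (𝕂 := ℂ) (𝔸 := ℂ) μ

/-- Spectral mapping (inclusion) for the matrix exponential. -/
lemma spectrum_exp_subset {n : ℕ} (M : Matrix (Fin n) (Fin n) ℂ) :
    ∀ ν ∈ spectrum ℂ (exp M), ∃ μ ∈ spectrum ℂ M, ν = Complex.exp μ := by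
  intro ν hν
  set φ := (Matrix.toLinAlgEquiv' : Matrix (Fin n) (Fin n) ℂ ≃ₐ[ℂ] _) with hφ
  set g := φ (exp M) with hgdef
  set f := φ M with hfdef
  have hν' : ν ∈ spectrum ℂ g := by rwa [AlgEquiv.spectrum_eq]
  have hg : Module.End.HasEigenvalue g ν := Module.End.hasEigenvalue_iff_mem_spectrum.mpr hν'
  set V := Module.End.eigenspace g ν with hVdef
  haveI : Nontrivial V := Submodule.nontrivial_iff_ne_bot.mpr hg
  have hcomm : f * g = g * f := by
    rw [hgdef, hfdef, ← _root_.map_mul, ← _root_.map_mul]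
    exact congrArg φ ((Commute.refl M).exp_right)
  have hmap : ∀ x ∈ V, f x ∈ V := by
    intro x hx
    rw [hVdef, Module.End.mem_eigenspace_iff] at hx ⊢
    calc g (f x) = (g * f) x := rfl
      _ = (f * g) x := by rw [hcomm]
      _ = f (g x) := rfl
      _ = ν • f x := by rw [hx, _root_.map_smul]
  set f' := LinearMap.restrict f hmap with hf'
  obtain ⟨μ, hμ⟩ := Module.End.exists_eigenvalue f'
  obtain ⟨w, hw⟩ := hμ.exists_hasEigenvector
  set v : Fin n → ℂ := (w : Fin n → ℂ) with hvdef
  have hv0 : v ≠ 0 := fun h => hw.right (by exact_mod_cast Subtype.ext h)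
  have hfv : M.mulVec v = μ • v := by
    have h1 : f' w = μ • w := hw.apply_eq_smul
    have h2 : ((f' w : V) : Fin n → ℂ) = f v := LinearMap.restrict_coe_apply f hmap w
    rw [← Matrix.toLinAlgEquiv'_apply, ← hfdef, ← h2, h1]
    rfl
  have hgv : (exp M).mulVec v = ν • v := by
    have : v ∈ V := w.2
    rw [hVdef, Module.End.mem_eigenspace_iff] at this
    rw [← Matrix.toLinAlgEquiv'_apply, ← hgdef, this]
  refine ⟨μ, ?_, ?_⟩
  · rw [← AlgEquiv.spectrum_eq φ, ← Module.End.hasEigenvalue_iff_mem_spectrum]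
    exact Module.End.hasEigenvalue_of_hasEigenvector
      ⟨Module.End.mem_eigenspace_iff.mpr
        (by rw [← hfdef] at *; rw [Matrix.toLinAlgEquiv'_apply] at *; exact hfv), hv0⟩
  · have := hgv.symm.trans (mulVec_exp_eigen M hfv)
    exact smul_left_injective ℂ hv0 this

lemma spectralRadius_exp_lt_one {n : ℕ} (M : Matrix (Fin n) (Fin n) ℂ)
    (hM : ∀ μ ∈ spectrum ℂ M, μ.re < 0) :
    spectralRadius ℂ (exp M) < 1 := by
  rcases (spectrum ℂ M).eq_empty_or_nonempty with he | hne
  · have hempty : spectrum ℂ (exp M) = ∅ := by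
      rw [Set.eq_empty_iff_forall_notMem]
      intro ν hν
      obtain ⟨μ, hμ, -⟩ := spectrum_exp_subset M ν hν
      simp [he] at hμ
    rw [spectralRadius, hempty]
    simp
  · obtain ⟨z, hz, hzmax⟩ := (spectrum.isCompact M).exists_isMaxOn hne
      ((Real.continuous_exp.comp Complex.continuous_re).continuousOn)
    have hr1 : Real.exp z.re < 1 := Real.exp_lt_one_iff.mpr (hM z hz)
    have hle : spectralRadius ℂ (exp M) ≤ ENNReal.ofReal (Real.exp z.re) := by
      rw [spectralRadius]
      refine iSup₂_le fun ν hν => ?_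
      obtain ⟨μ, hμ, rfl⟩ := spectrum_exp_subset M ν hν
      rw [show ((‖Complex.exp μ‖₊ : ℝ≥0∞)) = ENNReal.ofReal ‖Complex.exp μ‖ from (ofReal_norm _).symm]
      exact ENNReal.ofReal_le_ofReal
        (by rw [Complex.norm_exp]; exact hzmax hμ)
    exact lt_of_le_of_lt hle (ENNReal.ofReal_lt_one.mpr hr1)

lemma pow_norm_geom {n : ℕ} (S : Matrix (Fin n) (Fin n) ℂ) (h : spectralRadius ℂ S < 1) :
    ∃ C : ℝ, 0 < C ∧ ∃ c : ℝ, 0 < c ∧ c < 1 ∧ ∀ k : ℕ, ‖S ^ k‖ ≤ C * c ^ k := by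
  obtain ⟨c, hc1, hc2⟩ := exists_between h
  have hc0 : 0 < c := lt_of_le_of_lt zero_le hc1
  have hctop : c ≠ ⊤ := ne_top_of_lt hc2
  have hev : ∀ᶠ k : ℕ in atTop, (‖S ^ k‖₊ : ℝ≥0∞) ^ (1 / (k : ℝ)) < c :=
    (spectrum.pow_nnnorm_pow_one_div_tendsto_nhds_spectralRadius S).eventually_lt_const hc1
  obtain ⟨K, hK⟩ := eventually_atTop.mp hev
  set cr : ℝ := c.toReal with hcr
  have hcr0 : 0 < cr := ENNReal.toReal_pos hc0.ne' hctop
  have hcr1 : cr < 1 := by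
    rw [hcr, ← ENNReal.toReal_one]
    exact ENNReal.toReal_strict_mono (by simp) hc2
  have hgeo : ∀ k, max K 1 ≤ k → ‖S ^ k‖ ≤ cr ^ k := by
    intro k hk
    have hkK : K ≤ k := le_trans (le_max_left _ _) hk
    have h1 := hK k hkK
    have hkne : (k : ℝ) ≠ 0 := Nat.cast_ne_zero.mpr (by omega)
    have h2 : ((‖S ^ k‖₊ : ℝ≥0∞) ^ (1 / (k : ℝ))) ^ (k : ℝ) ≤ c ^ (k : ℝ) :=
      ENNReal.rpow_le_rpow h1.le (by positivity)
    rw [← ENNReal.rpow_mul, one_div_mul_cancel hkne, ENNReal.rpow_one] at h2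
    have h3 : (‖S ^ k‖₊ : ℝ≥0∞) ≤ c ^ k := by
      rwa [← ENNReal.rpow_natCast c k]
    have h4 := ENNReal.toReal_mono (by simp [ENNReal.pow_ne_top hctop]) h3
    rw [ENNReal.coe_toReal, coe_nnnorm] at h4
    rwa [ENNReal.toReal_pow] at h4
  refine ⟨1 + ∑ k ∈ Finset.range (max K 1), ‖S ^ k‖ / cr ^ k, by positivity, cr, hcr0, hcr1, ?_⟩
  intro k
  rcases lt_or_ge k (max K 1) with hk | hk
  · have hterm : ‖S ^ k‖ / cr ^ k ≤ ∑ j ∈ Finset.range (max K 1), ‖S ^ j‖ / cr ^ j :=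
      Finset.single_le_sum (f := fun j => ‖S ^ j‖ / cr ^ j)
        (fun j _ => by positivity) (Finset.mem_range.mpr hk)
    have : ‖S ^ k‖ = (‖S ^ k‖ / cr ^ k) * cr ^ k := by field_simp
    rw [this]
    have hpk : (0:ℝ) < cr ^ k := by positivity
    nlinarith [norm_nonneg (S ^ k), hterm, hpk]
  · have := hgeo k hk
    nlinarith [pow_pos hcr0 k,
      Finset.sum_nonneg (fun j (_ : j ∈ Finset.range (max K 1)) =>
        (by positivity : (0:ℝ) ≤ ‖S ^ j‖ / cr ^ j))]

lemma complex_decay {n : ℕ} (M : Matrix (Fin n) (Fin n) ℂ)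
    (hM : ∀ μ ∈ spectrum ℂ M, μ.re < 0) :
    ∃ C : ℝ, 0 < C ∧ ∃ ε : ℝ, 0 < ε ∧ ∀ t : ℝ, 0 ≤ t →
      ‖exp (t • M)‖ ≤ C * Real.exp (-ε * t) := by
  obtain ⟨C, hC, c, hc0, hc1, hpow⟩ := pow_norm_geom _ (spectralRadius_exp_lt_one M hM)
  obtain ⟨s₀, -, hD⟩ := isCompact_Icc.exists_isMaxOn (f := fun s : ℝ => ‖exp (s • M)‖)
    (Set.nonempty_Icc.mpr zero_le_one)
    ((exp_continuous.comp ((continuous_id : Continuous fun s : ℝ => s).smul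
      continuous_const)).norm.continuousOn)
  set D : ℝ := max ‖exp (s₀ • M)‖ 1 with hDdef
  have hD1 : (1:ℝ) ≤ D := le_max_right _ _
  have hDb : ∀ s ∈ Set.Icc (0:ℝ) 1, ‖exp (s • M)‖ ≤ D :=
    fun s hs => le_trans (hD hs) (le_max_left _ _)
  refine ⟨C * D / c, by positivity, -Real.log c, by
      simpa using neg_pos.mpr (Real.log_neg hc0 hc1), ?_⟩
  intro t ht
  rw [neg_neg]
  set k : ℕ := ⌊t⌋₊ with hk
  have hkt : (k : ℝ) ≤ t := Nat.floor_le ht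
  have htk : t < k + 1 := Nat.lt_floor_add_one t
  have hsplit : exp (t • M) = exp M ^ k * exp ((t - k) • M) := by
    have h1 : t • M = (k : ℝ) • M + (t - k) • M := by rw [← add_smul]; ring_nf
    rw [h1, Matrix.exp_add_of_commute _ _ (((Commute.refl M).smul_left _).smul_right _)]
    congr 1
    rw [Nat.cast_smul_eq_nsmul, Matrix.exp_nsmul]
  have hnorm1 : ‖exp (t • M)‖ ≤ ‖exp M ^ k‖ * ‖exp ((t - k) • M)‖ := by
    rw [hsplit]; exact norm_mul_le _ _
  have h2 : ‖exp ((t - k) • M)‖ ≤ D := hDb _ ⟨by linarith, by linarith⟩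
  have hD0 : (0:ℝ) ≤ D := le_trans zero_le_one hD1
  have h3 : c ^ k ≤ Real.exp (Real.log c * t) / c := by
    have hck : Real.exp ((k : ℝ) * Real.log c) = c ^ k := by
      rw [Real.exp_nat_mul, Real.exp_log hc0]
    have hdiv : Real.exp (Real.log c * t) / c
        = Real.exp (Real.log c * t) * Real.exp (-Real.log c) := by
      rw [Real.exp_neg, Real.exp_log hc0, div_eq_mul_inv]
    rw [← hck, hdiv, ← Real.exp_add]
    apply Real.exp_le_exp.mpr
    have hlog : Real.log c < 0 := Real.log_neg hc0 hc1
    nlinarith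
  calc ‖exp (t • M)‖ ≤ ‖exp M ^ k‖ * ‖exp ((t - k) • M)‖ := hnorm1
    _ ≤ (C * c ^ k) * D := by
        apply mul_le_mul (hpow k) h2 (norm_nonneg _)
        positivity
    _ ≤ (C * (Real.exp (Real.log c * t) / c)) * D := by gcongr
    _ = C * D / c * Real.exp (Real.log c * t) := by ring

lemma norm_map_complex {n : ℕ} (X : Matrix (Fin n) (Fin n) ℝ) :
    ‖X.map (algebraMap ℝ ℂ)‖ = ‖X‖ := by
  rw [Matrix.linfty_opNorm_def, Matrix.linfty_opNorm_def]
  congr 1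
  apply Finset.sup_congr rfl
  intro i _
  apply Finset.sum_congr rfl
  intro j _
  simp [Matrix.map_apply]

lemma exp_map_complex {n : ℕ} (A : Matrix (Fin n) (Fin n) ℝ) (t : ℝ) :
    (exp (t • A)).map (algebraMap ℝ ℂ) = exp (t • A.map (algebraMap ℝ ℂ)) := by
  have hcont : Continuous ((algebraMap ℝ ℂ).mapMatrix :
      Matrix (Fin n) (Fin n) ℝ →+* Matrix (Fin n) (Fin n) ℂ) := by
    have : ((algebraMap ℝ ℂ).mapMatrix : Matrix (Fin n) (Fin n) ℝ →+* Matrix (Fin n) (Fin n) ℂ)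
        = fun X : Matrix (Fin n) (Fin n) ℝ => X.map (algebraMap ℝ ℂ) := rfl
    rw [this]
    exact Continuous.matrix_map continuous_id Complex.continuous_ofReal
  have h := map_exp ((algebraMap ℝ ℂ).mapMatrix :
      Matrix (Fin n) (Fin n) ℝ →+* Matrix (Fin n) (Fin n) ℂ) hcont (t • A)
  have h2 : ((algebraMap ℝ ℂ).mapMatrix) (t • A) = t • A.map (algebraMap ℝ ℂ) := by
    ext i j
    simp [RingHom.mapMatrix_apply, Matrix.map_apply, Complex.real_smul]
  rw [RingHom.mapMatrix_apply] at h
  rw [h2] at h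
  exact h

lemma real_decay {n : ℕ} (A : Matrix (Fin n) (Fin n) ℝ) (hA : IsHurwitz A) :
    ∃ C : ℝ, 0 < C ∧ ∃ ε : ℝ, 0 < ε ∧ ∀ t : ℝ, 0 ≤ t →
      ‖exp (t • A)‖ ≤ C * Real.exp (-ε * t) := by
  obtain ⟨C, hC, ε, hε, hb⟩ := complex_decay (A.map (algebraMap ℝ ℂ)) hA
  exact ⟨C, hC, ε, hε, fun t ht => by
    rw [← norm_map_complex, exp_map_complex]
    exact hb t ht⟩

lemma isHurwitz_transpose {n : ℕ} {A : Matrix (Fin n) (Fin n) ℝ} (hA : IsHurwitz A) :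
    IsHurwitz Aᵀ := by
  intro μ hμ
  apply hA μ
  rw [spectrum.mem_iff] at hμ ⊢
  intro hUnit
  apply hμ
  have heq : algebraMap ℂ (Matrix (Fin n) (Fin n) ℂ) μ - (Aᵀ).map (algebraMap ℝ ℂ)
      = (algebraMap ℂ (Matrix (Fin n) (Fin n) ℂ) μ - A.map (algebraMap ℝ ℂ))ᵀ := by
    rw [Matrix.transpose_sub, Matrix.transpose_map]
    congr 1
    rw [Matrix.algebraMap_eq_diagonal, Matrix.diagonal_transpose]
  rw [heq, Matrix.isUnit_iff_isUnit_det, Matrix.det_transpose, ← Matrix.isUnit_iff_isUnit_det]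
  exact hUnit

/-- The Gramian integrand. -/
noncomputable def Fm {n m : ℕ} (A : Matrix (Fin n) (Fin n) ℝ) (B : Matrix (Fin n) (Fin m) ℝ) (t : ℝ) :
    Matrix (Fin n) (Fin n) ℝ :=
  exp (t • A) * B * Bᵀ * exp (t • Aᵀ)

theorem main {n m : ℕ}
    (A : Matrix (Fin n) (Fin n) ℝ) (B : Matrix (Fin n) (Fin m) ℝ)
    (hA : IsHurwitz A) :
    (∀ i j, IntegrableOn (fun t : ℝ => Fm A B t i j) (Set.Ioi 0)) ∧
    (A * (Matrix.of fun i j => ∫ t in Set.Ioi (0 : ℝ), Fm A B t i j)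
      + (Matrix.of fun i j => ∫ t in Set.Ioi (0 : ℝ), Fm A B t i j) * Aᵀ
      + B * Bᵀ = 0) := by
  classical
  obtain ⟨CA, hCA, εA, hεA, hbA⟩ := real_decay A hA
  obtain ⟨CT, hCT, εT, hεT, hbT⟩ := real_decay Aᵀ (isHurwitz_transpose hA)
  set ε : ℝ := εA + εT with hε
  have hε0 : 0 < ε := by positivity
  have hFQ : ∀ t : ℝ, Fm A B t = exp (t • A) * ((B * Bᵀ) * exp (t • Aᵀ)) := by
    intro t
    rw [Fm]
    simp only [Matrix.mul_assoc]
  set K : ℝ := CA * CT * ‖B * Bᵀ‖ with hK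
  have hQ0 : 0 ≤ ‖B * Bᵀ‖ := norm_nonneg _
  have hK0 : 0 ≤ K := by positivity
  have hFb : ∀ t : ℝ, 0 ≤ t → ‖Fm A B t‖ ≤ K * Real.exp (-ε * t) := by
    intro t ht
    calc ‖Fm A B t‖ ≤ ‖exp (t • A)‖ * (‖B * Bᵀ‖ * ‖exp (t • Aᵀ)‖) := by
          rw [hFQ t]
          exact le_trans (norm_mul_le _ _) (by gcongr; exact norm_mul_le _ _)
      _ ≤ (CA * Real.exp (-εA * t)) * (‖B * Bᵀ‖ * (CT * Real.exp (-εT * t))) := by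
          gcongr
          · exact hbA t ht
          · exact hbT t ht
      _ = K * Real.exp (-ε * t) := by
          rw [hK, hε, show -(εA + εT) * t = (-εA * t) + (-εT * t) by ring, Real.exp_add]
          ring
  have hcA : Continuous fun t : ℝ => exp (t • A) :=
    exp_continuous.comp ((continuous_id : Continuous fun t : ℝ => t).smul continuous_const)
  have hcT : Continuous fun t : ℝ => exp (t • Aᵀ) :=
    exp_continuous.comp ((continuous_id : Continuous fun t : ℝ => t).smul continuous_const)
  have hFc : Continuous (Fm A B) :=
    ((hcA.matrix_mul continuous_const).matrix_mul continuous_const).matrix_mul hcT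
  have hgint : IntegrableOn (fun t : ℝ => K * Real.exp (-ε * t)) (Set.Ioi 0) :=
    (exp_neg_integrableOn_Ioi 0 hε0).const_mul K
  have hint : ∀ (i : Fin n) (j : Fin n), IntegrableOn (fun t => Fm A B t i j) (Set.Ioi 0) := by
    intro i j
    refine Integrable.mono' hgint ((hFc.matrix_elem i j).aestronglyMeasurable) ?_
    filter_upwards [ae_restrict_mem measurableSet_Ioi] with t ht
    exact le_trans (entry_norm_le _ i j) (hFb t (le_of_lt ht))
  have hFd : ∀ t : ℝ, HasDerivAt (Fm A B) (A * Fm A B t + Fm A B t * Aᵀ) t := by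
    intro t
    have h1 : HasDerivAt (fun u : ℝ => exp (u • A)) (A * exp (t • A)) t :=
      hasDerivAt_exp_smul_const' A t
    have h2 : HasDerivAt (fun u : ℝ => exp (u • Aᵀ)) (exp (t • Aᵀ) * Aᵀ) t :=
      hasDerivAt_exp_smul_const Aᵀ t
    have h3 := h2.const_mul (B * Bᵀ)
    have h4 := h1.mul h3
    have hfun : (fun u : ℝ => exp (u • A) * ((B * Bᵀ) * exp (u • Aᵀ))) = Fm A B := by
      funext u
      rw [hFQ u]
    rw [show ((fun u : ℝ => exp (u • A)) * fun y => (B * Bᵀ) * exp (y • Aᵀ)) = Fm A B from hfun] at h4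
    refine HasDerivAt.congr_deriv h4 ?_
    rw [hFQ t]
    simp only [Matrix.mul_assoc]
  have hFde : ∀ (i j : Fin n) (t : ℝ),
      HasDerivAt (fun u => Fm A B u i j) ((A * Fm A B t + Fm A B t * Aᵀ) i j) t := by
    intro i j t
    let L : Matrix (Fin n) (Fin n) ℝ →ₗ[ℝ] ℝ :=
      { toFun := fun X => X i j
        map_add' := fun X Y => rfl
        map_smul' := fun c X => rfl }
    have := (LinearMap.toContinuousLinearMap L).hasFDerivAt.comp_hasDerivAt t (hFd t)
    exact this
  have hexp0 : Tendsto (fun t : ℝ => K * Real.exp (-ε * t)) atTop (𝓝 0) := by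
    have h0 : Tendsto (fun t : ℝ => Real.exp (-ε * t)) atTop (𝓝 0) := by
      apply Real.tendsto_exp_atBot.comp
      exact (tendsto_const_mul_atBot_of_neg (neg_lt_zero.mpr hε0)).mpr tendsto_id
    simpa using h0.const_mul K
  have htend : ∀ (i j : Fin n), Tendsto (fun t => Fm A B t i j) atTop (𝓝 (0:ℝ)) := by
    intro i j
    apply squeeze_zero_norm' _ hexp0
    filter_upwards [eventually_ge_atTop (0:ℝ)] with t ht
    exact le_trans (entry_norm_le _ i j) (hFb t ht)
  have hDc : Continuous fun t => A * Fm A B t + Fm A B t * Aᵀ :=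
    (continuous_const.matrix_mul hFc).add (hFc.matrix_mul continuous_const)
  have hint2 : ∀ (i j : Fin n),
      IntegrableOn (fun t => (A * Fm A B t + Fm A B t * Aᵀ) i j) (Set.Ioi 0) := by
    intro i j
    refine Integrable.mono' (hgint.const_mul (‖A‖ + ‖Aᵀ‖))
      ((hDc.matrix_elem i j).aestronglyMeasurable) ?_
    filter_upwards [ae_restrict_mem measurableSet_Ioi] with t ht
    refine le_trans (entry_norm_le _ i j) ?_
    calc ‖(A * Fm A B t + Fm A B t * Aᵀ)‖ ≤ ‖A‖ * ‖Fm A B t‖ + ‖Fm A B t‖ * ‖Aᵀ‖ :=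
          le_trans (norm_add_le _ _) (add_le_add (norm_mul_le _ _) (norm_mul_le _ _))
      _ ≤ ‖A‖ * (K * Real.exp (-ε * t)) + (K * Real.exp (-ε * t)) * ‖Aᵀ‖ := by
          have h := hFb t (le_of_lt ht)
          gcongr <;> exact h
      _ = (‖A‖ + ‖Aᵀ‖) * (K * Real.exp (-ε * t)) := by ring
  have hF0 : Fm A B 0 = B * Bᵀ := by
    rw [Fm]
    simp
  have key : ∀ (i j : Fin n),
      (∫ t in Set.Ioi (0:ℝ), (A * Fm A B t + Fm A B t * Aᵀ) i j) = -((B * Bᵀ) i j) := by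
    intro i j
    have h := integral_Ioi_of_hasDerivAt_of_tendsto' (a := (0:ℝ)) (m := (0:ℝ))
      (f := fun t => Fm A B t i j) (f' := fun t => (A * Fm A B t + Fm A B t * Aᵀ) i j)
      (fun x _ => hFde i j x) (hint2 i j) (htend i j)
    rw [h]
    simp [hF0]
  refine ⟨hint, ?_⟩
  ext i j
  have hiAF : IntegrableOn (fun t => (A * Fm A B t) i j) (Set.Ioi 0) := by
    have hrw : (fun t => (A * Fm A B t) i j) = fun t => ∑ k, A i k * Fm A B t k j := by
      funext t; simp [Matrix.mul_apply]
    rw [hrw]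
    exact integrable_finset_sum _ (fun k _ => (hint k j).const_mul _)
  have hiFA : IntegrableOn (fun t => (Fm A B t * Aᵀ) i j) (Set.Ioi 0) := by
    have hrw : (fun t => (Fm A B t * Aᵀ) i j) = fun t => ∑ k, Fm A B t i k * Aᵀ k j := by
      funext t; simp [Matrix.mul_apply]
    rw [hrw]
    exact integrable_finset_sum _ (fun k _ => (hint i k).mul_const _)
  have e1 : (∑ k, A i k * ∫ t in Set.Ioi (0:ℝ), Fm A B t k j)
      = ∫ t in Set.Ioi (0:ℝ), (A * Fm A B t) i j := by
    have hrw : (fun t => (A * Fm A B t) i j) = fun t => ∑ k, A i k * Fm A B t k j := by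
      funext t; simp [Matrix.mul_apply]
    rw [hrw, integral_finset_sum _ (fun k _ => (hint k j).const_mul _)]
    exact Finset.sum_congr rfl fun k _ => (integral_const_mul _ _).symm
  have e2 : (∑ k, (∫ t in Set.Ioi (0:ℝ), Fm A B t i k) * Aᵀ k j)
      = ∫ t in Set.Ioi (0:ℝ), (Fm A B t * Aᵀ) i j := by
    have hrw : (fun t => (Fm A B t * Aᵀ) i j) = fun t => ∑ k, Fm A B t i k * Aᵀ k j := by
      funext t; simp [Matrix.mul_apply]
    rw [hrw, integral_finset_sum _ (fun k _ => (hint i k).mul_const _)]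
    exact Finset.sum_congr rfl fun k _ => (integral_mul_const _ _).symm
  simp only [Matrix.add_apply, Matrix.mul_apply, Matrix.of_apply, Matrix.zero_apply]
  rw [show (∑ k, A i k * ∫ t in Set.Ioi (0:ℝ), Fm A B t k j)
      = ∫ t in Set.Ioi (0:ℝ), (A * Fm A B t) i j from e1]
  rw [show (∑ k, (∫ t in Set.Ioi (0:ℝ), Fm A B t i k) * Aᵀ k j)
      = ∫ t in Set.Ioi (0:ℝ), (Fm A B t * Aᵀ) i j from e2]
  rw [← integral_add hiAF hiFA]
  simp only [← Matrix.add_apply]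
  rw [key i j]
  simp [Matrix.mul_apply]

end GramianLyapunovAux

/-- For Hurwitz `A`, the controllability Gramian integral
`P = ∫₀^∞ e^{At} B Bᵀ e^{Aᵀt} dt` converges (entrywise) and satisfies the
Lyapunov equation `A P + P Aᵀ + B Bᵀ = 0`. -/
theorem gramian_exists_and_lyapunov {n m : ℕ}
    (A : Matrix (Fin n) (Fin n) ℝ) (B : Matrix (Fin n) (Fin m) ℝ)
    (hA : IsHurwitz A) :
    (∀ i j, IntegrableOn
      (fun t : ℝ => (NormedSpace.exp (t • A) * B * Bᵀ * NormedSpace.exp (t • Aᵀ)) i j)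
      (Set.Ioi 0)) ∧
    (A * (Matrix.of fun i j => ∫ t in Set.Ioi (0 : ℝ),
        (NormedSpace.exp (t • A) * B * Bᵀ * NormedSpace.exp (t • Aᵀ)) i j)
      + (Matrix.of fun i j => ∫ t in Set.Ioi (0 : ℝ),
        (NormedSpace.exp (t • A) * B * Bᵀ * NormedSpace.exp (t • Aᵀ)) i j) * Aᵀ
      + B * Bᵀ = 0) := by
  exact GramianLyapunovAux.main A B hA
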